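/- For every natural number k there exists a ℂ-algebra isomorphism i : ℂl_{2k} → ℂ(2^k) such that i(τ(φ)) = (i(φ))* for every φ ∈ ℂl_{2k}, where * denotes the conjugate-transpose of a matrix; that is, under a suitable isomorphism with the matrix algebra, the antiautomorphism τ is translated as the conjugate transpose. -/

import Mathlib

open scoped TensorProduct

/-- The negative-definite quadratic form `Q x = -‖x‖²` on `ℝⁿ`. -/
noncomputable def Qr (n : ℕ) : QuadraticForm ℝ (Fin n → ℝ) :=
  QuadraticMap.weightedSumSquares ℝ (fun _ : Fin n => (-1 : ℝ))

/-- The real Clifford algebra `Cl_n` of `ℝⁿ` with `Q x = -‖x‖²`. -/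
noncomputable abbrev Cl (n : ℕ) := CliffordAlgebra (Qr n)

/-- The complexified Clifford algebra `ℂl_n = ℂ ⊗_ℝ Cl_n`. -/
noncomputable abbrev CliffC (n : ℕ) := ℂ ⊗[ℝ] Cl n

/-- The canonical embedding `ℝⁿ → ℂl_n`. -/
noncomputable def iotaC (n : ℕ) (v : Fin n → ℝ) : CliffC n :=
  (1 : ℂ) ⊗ₜ[ℝ] (CliffordAlgebra.ι (Qr n) v)

/-- The canonical inclusion `Cl_n → ℂl_n`. -/
noncomputable def inclC (n : ℕ) : Cl n →ₐ[ℝ] CliffC n :=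
  Algebra.TensorProduct.includeRight

/-- The conjugate-linear antiautomorphism `τ` of `ℂl_n`: the composite of complex
conjugation of the scalars, the grade involution and reversal.  It satisfies
`τ (a e_{i₁} ⋯ e_{i_r}) = (-1)^r ā e_{i_r} ⋯ e_{i₁}`, in particular `τ (ι v) = -ι v`
for `v ∈ ℝⁿ`, `τ (x * y) = τ y * τ x` and `τ ∘ τ = id`. -/
noncomputable def tau (n : ℕ) : CliffC n →ₗ[ℝ] CliffC n :=
  TensorProduct.map (Complex.conjAe.toLinearMap)
    ((CliffordAlgebra.reverse (Q := Qr n)).comp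
      (CliffordAlgebra.involute (Q := Qr n)).toLinearMap)


open Matrix Complex

namespace Stmt9

abbrev M2 := Matrix (Fin 2) (Fin 2) ℂ

def s1 : M2 := !![0, 1; 1, 0]
def s2 : M2 := !![0, -Complex.I; Complex.I, 0]
def s3 : M2 := !![1, 0; 0, -1]

lemma s1_sq : s1 * s1 = 1 := by
  simp [s1, Matrix.mul_fin_two, Matrix.one_fin_two]
lemma s2_sq : s2 * s2 = 1 := by
  simp [s2, Matrix.mul_fin_two, Matrix.one_fin_two, Complex.I_mul_I]
lemma s3_sq : s3 * s3 = 1 := by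
  simp [s3, Matrix.mul_fin_two, Matrix.one_fin_two]
lemma s12 : s1 * s2 = -(s2 * s1) := by simp [s1, s2, Matrix.mul_fin_two]
lemma s13 : s1 * s3 = -(s3 * s1) := by simp [s1, s3, Matrix.mul_fin_two]
lemma s23 : s2 * s3 = -(s3 * s2) := by simp [s2, s3, Matrix.mul_fin_two]
lemma s1_h : s1ᴴ = s1 := by
  ext i j; fin_cases i <;> fin_cases j <;> simp [s1, conjTranspose_apply]
lemma s2_h : s2ᴴ = s2 := by
  ext i j; fin_cases i <;> fin_cases j <;> simp [s2, conjTranspose_apply]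
lemma s3_h : s3ᴴ = s3 := by
  ext i j; fin_cases i <;> fin_cases j <;> simp [s3, conjTranspose_apply]

variable {k : ℕ}

abbrev X (k : ℕ) := Fin k → Fin 2

/-- tensor product of `k` 2×2 matrices, as a matrix indexed by `Fin k → Fin 2`. -/
def Tm (f : Fin k → M2) : Matrix (X k) (X k) ℂ :=
  Matrix.of fun x y => ∏ l, f l (x l) (y l)

lemma Tm_apply (f : Fin k → M2) (x y : X k) : Tm f x y = ∏ l, f l (x l) (y l) := rfl

lemma Tm_one : Tm (fun _ : Fin k => (1 : M2)) = 1 := by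
  ext x y
  simp only [Tm_apply, Matrix.one_apply]
  rw [Finset.prod_boole]
  simp [funext_iff]

lemma Tm_mul (f g : Fin k → M2) : Tm f * Tm g = Tm (fun l => f l * g l) := by
  ext x z
  rw [Matrix.mul_apply]
  simp only [Tm_apply, Matrix.mul_apply]
  rw [Finset.prod_univ_sum]
  rw [Fintype.piFinset_univ]
  exact Finset.sum_congr rfl fun y _ => (Finset.prod_mul_distrib).symm

lemma Tm_conjTranspose (f : Fin k → M2) : (Tm f)ᴴ = Tm (fun l => (f l)ᴴ) := by
  ext x y
  simp only [conjTranspose_apply, Tm_apply]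
  exact map_prod (starRingEnd ℂ) _ _

lemma Tm_negsite (f g : Fin k → M2) (j : Fin k) (h1 : ∀ l, l ≠ j → f l = g l)
    (h2 : f j = -(g j)) : Tm f = -Tm g := by
  ext x y
  simp only [Tm_apply, Matrix.neg_apply]
  rw [← Finset.prod_erase_mul _ _ (Finset.mem_univ j),
      ← Finset.prod_erase_mul _ (fun l => g l (x l) (y l)) (Finset.mem_univ j)]
  rw [Finset.prod_congr rfl (fun l hl => by
    rw [h1 l (Finset.ne_of_mem_erase hl)])]
  rw [h2]
  simp [mul_comm]

end Stmt9

namespace Stmt9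
variable {k : ℕ}

def site (a : Fin (2*k)) : M2 := if (a:ℕ) % 2 = 0 then Complex.I • s1 else Complex.I • s2

def gf (a : Fin (2*k)) : Fin k → M2 := fun l =>
  if (l:ℕ) < (a:ℕ)/2 then s3 else if (l:ℕ) = (a:ℕ)/2 then site a else 1

def jfin (a : Fin (2*k)) : Fin k := ⟨(a:ℕ)/2, by
  have := a.isLt; omega⟩

lemma gf_jfin (a : Fin (2*k)) : gf a (jfin a) = site a := by
  simp [gf, jfin]

lemma gf_ne (a : Fin (2*k)) (l : Fin k) (h : l ≠ jfin a) :
    gf a l = if (l:ℕ) < (a:ℕ)/2 then s3 else 1 := by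
  have h' : (l:ℕ) ≠ (a:ℕ)/2 := by
    intro hc; exact h (Fin.ext hc)
  simp [gf, h']

lemma jfin_coe (a : Fin (2*k)) : ((jfin a : Fin k) : ℕ) = (a:ℕ)/2 := rfl

def gam (a : Fin (2*k)) : Matrix (X k) (X k) ℂ := Tm (gf a)

lemma site_sq (a : Fin (2*k)) : site a * site a = -1 := by
  unfold site
  split_ifs <;>
  · rw [Matrix.smul_mul, Matrix.mul_smul, smul_smul, Complex.I_mul_I]
    first
      | rw [s1_sq] | rw [s2_sq]
    simp

lemma site_h (a : Fin (2*k)) : (site a)ᴴ = -(site a) := by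
  unfold site
  split_ifs <;>
  · rw [Matrix.conjTranspose_smul]
    first
      | rw [s1_h] | rw [s2_h]
    simp [Complex.conj_I]

lemma site_s3 (a : Fin (2*k)) : site a * s3 = -(s3 * site a) := by
  unfold site
  split_ifs <;>
  · rw [Matrix.smul_mul, Matrix.mul_smul]
    first
      | rw [s13] | rw [s23]
    simp

lemma site_anticomm (a b : Fin (2*k)) (h : (a:ℕ) % 2 ≠ (b:ℕ) % 2) :
    site a * site b = -(site b * site a) := by
  unfold site
  have h2a := Nat.mod_two_eq_zero_or_one (a:ℕ)
  have h2b := Nat.mod_two_eq_zero_or_one (b:ℕ)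
  rcases h2a with ha | ha <;> rcases h2b with hb | hb <;>
    simp only [ha, hb] at h ⊢ <;> try omega
  · simp only [if_true, if_neg (by omega : ¬(1=0))]
    rw [Matrix.smul_mul, Matrix.mul_smul, Matrix.smul_mul, Matrix.mul_smul, s12]
    simp
  · simp only [if_true, if_neg (by omega : ¬(1=0))]
    rw [Matrix.smul_mul, Matrix.mul_smul, Matrix.smul_mul, Matrix.mul_smul, s12]
    simp

lemma gam_sq (a : Fin (2*k)) : gam a * gam a = -1 := by
  rw [gam, Tm_mul]
  have : Tm (fun l => gf a l * gf a l) = -Tm (fun _ : Fin k => (1:M2)) := by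
    apply Tm_negsite _ _ (jfin a)
    · intro l hl
      rw [gf_ne a l hl]
      split_ifs
      · exact s3_sq
      · exact one_mul 1
    · rw [gf_jfin, site_sq]
  rw [this, Tm_one]

lemma gam_h (a : Fin (2*k)) : (gam a)ᴴ = -gam a := by
  rw [gam, Tm_conjTranspose]
  apply Tm_negsite _ _ (jfin a)
  · intro l hl
    rw [gf_ne a l hl]
    split_ifs
    · exact s3_h
    · exact Matrix.conjTranspose_one
  · rw [gf_jfin]; exact site_h a

lemma gam_anticomm_aux (a b : Fin (2*k))
    (hab : (a:ℕ)/2 < (b:ℕ)/2 ∨ ((a:ℕ)/2 = (b:ℕ)/2 ∧ (a:ℕ) % 2 ≠ (b:ℕ) % 2)) :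
    gam a * gam b = -(gam b * gam a) := by
  rw [gam, gam, Tm_mul, Tm_mul]
  apply Tm_negsite _ _ (jfin a)
  · intro l hl
    rw [gf_ne a l hl]
    rcases hab with hlt | ⟨heq, _⟩
    · by_cases h1 : (l:ℕ) < (a:ℕ)/2
      · rw [if_pos h1]
        have : gf b l = s3 := by
          have : (l:ℕ) < (b:ℕ)/2 := by omega
          simp [gf, this]
        rw [this]
      · rw [if_neg h1, one_mul, mul_one]
    · have : gf b l = if (l:ℕ) < (a:ℕ)/2 then s3 else 1 := by
        rw [gf_ne b l (by
          intro hc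
          apply hl
          apply Fin.ext
          have hc' : (l:ℕ) = (b:ℕ)/2 := by rw [hc, jfin_coe]
          rw [jfin_coe]
          omega), heq]
      rw [this]
  · rw [gf_jfin]
    rcases hab with hlt | ⟨heq, hpar⟩
    · have hb : gf b (jfin a) = s3 := by
        have : ((jfin a : Fin k):ℕ) < (b:ℕ)/2 := by rw [jfin_coe]; omega
        simp [gf, this]
      rw [hb, site_s3]
    · have hb : gf b (jfin a) = site b := by
        have h1 : ¬ ((jfin a : Fin k):ℕ) < (b:ℕ)/2 := by rw [jfin_coe]; omega
        have h2 : ((jfin a : Fin k):ℕ) = (b:ℕ)/2 := by rw [jfin_coe]; omega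
        simp [gf, h1, h2]
      rw [hb, site_anticomm a b hpar]

lemma gam_anticomm {a b : Fin (2*k)} (h : a ≠ b) :
    gam a * gam b = -(gam b * gam a) := by
  rcases Nat.lt_trichotomy ((a:ℕ)/2) ((b:ℕ)/2) with hlt | heq | hgt
  · exact gam_anticomm_aux a b (Or.inl hlt)
  · have hpar : (a:ℕ) % 2 ≠ (b:ℕ) % 2 := by
      intro hc
      apply h
      apply Fin.ext
      omega
    exact gam_anticomm_aux a b (Or.inr ⟨heq, hpar⟩)
  · have := gam_anticomm_aux b a (Or.inl hgt)
    rw [this]; simp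

end Stmt9

namespace Stmt9
variable {k : ℕ}
open Matrix

def sing (j : Fin k) (m : M2) : Fin k → M2 := Function.update (fun _ => 1) j m

lemma Tm_update_apply (f : Fin k → M2) (j : Fin k) (m : M2) (x y : X k) :
    Tm (Function.update f j m) x y
      = m (x j) (y j) * ∏ l ∈ Finset.univ.erase j, f l (x l) (y l) := by
  rw [Tm_apply, ← Finset.prod_erase_mul _ _ (Finset.mem_univ j)]
  rw [Function.update_self, mul_comm]
  congr 1
  refine Finset.prod_congr rfl fun l hl => ?_
  rw [Function.update_of_ne (Finset.ne_of_mem_erase hl)]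

/-- inserting a matrix at site `j`, as a linear map. -/
def Lmap (j : Fin k) : M2 →ₗ[ℂ] Matrix (X k) (X k) ℂ where
  toFun m := Tm (sing j m)
  map_add' m m' := by
    ext x y
    simp only [sing, Tm_update_apply, Matrix.add_apply]
    ring
  map_smul' c m := by
    ext x y
    simp only [sing, Tm_update_apply, Matrix.smul_apply, RingHom.id_apply, smul_eq_mul]
    ring

lemma Lmap_apply (j : Fin k) (m : M2) : Lmap j m = Tm (sing j m) := rfl

lemma sing_one (j : Fin k) : sing j (1:M2) = fun _ => 1 := by
  funext l
  rcases eq_or_ne l j with h | h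
  · rw [h, sing, Function.update_self]
  · rw [sing, Function.update_of_ne h]

lemma s1s2 : s1 * s2 = Complex.I • s3 := by
  ext i j
  fin_cases i <;> fin_cases j <;>
    simp [s1, s2, s3, Matrix.mul_fin_two]

section Surj
variable (S : Subalgebra ℂ (Matrix (X k) (X k) ℂ)) (hS : ∀ a, gam a ∈ S)
include hS

lemma sing_s3_mem (j : Fin k) : Tm (sing j s3) ∈ S := by
  have hk : (2*(j:ℕ) < 2*k) ∧ (2*(j:ℕ)+1 < 2*k) := by have := j.isLt; omega
  set a : Fin (2*k) := ⟨2*(j:ℕ), hk.1⟩ with ha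
  set b : Fin (2*k) := ⟨2*(j:ℕ)+1, hk.2⟩ with hb
  have hva : (a:ℕ) = 2*(j:ℕ) := rfl
  have hvb : (b:ℕ) = 2*(j:ℕ)+1 := rfl
  have hja : (a:ℕ)/2 = (j:ℕ) := by omega
  have hjb : (b:ℕ)/2 = (j:ℕ) := by omega
  have hfun : (fun l => gf a l * gf b l) = sing j ((-Complex.I) • s3) := by
    funext l
    rcases lt_trichotomy ((l:ℕ)) ((j:ℕ)) with h | h | h
    · have h1 : gf a l = s3 := by
        simp only [gf, hja]
        rw [if_pos h]
      have h2 : gf b l = s3 := by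
        simp only [gf, hjb]
        rw [if_pos h]
      have h3 : l ≠ j := fun hc => by rw [hc] at h; omega
      rw [h1, h2, s3_sq, sing, Function.update_of_ne h3]
    · have hl : l = j := Fin.ext h
      have h1 : gf a l = Complex.I • s1 := by
        simp only [gf, hja, site]
        rw [if_neg (by omega), if_pos h, if_pos (by omega : (a:ℕ) % 2 = 0)]
      have h2 : gf b l = Complex.I • s2 := by
        simp only [gf, hjb, site]
        rw [if_neg (by omega), if_pos h, if_neg (by omega : ¬ (b:ℕ) % 2 = 0)]
      rw [h1, h2, hl, sing, Function.update_self]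
      rw [Matrix.smul_mul, Matrix.mul_smul, s1s2, smul_smul, smul_smul]
      congr 1
      simp [Complex.I_mul_I]
    · have h1 : gf a l = 1 := by
        simp only [gf, hja]
        rw [if_neg (by omega), if_neg (by omega)]
      have h2 : gf b l = 1 := by
        simp only [gf, hjb]
        rw [if_neg (by omega), if_neg (by omega)]
      have h3 : l ≠ j := fun hc => by rw [hc] at h; omega
      rw [h1, h2, one_mul, sing, Function.update_of_ne h3]
  have key : gam a * gam b = Tm (sing j ((-Complex.I) • s3)) := by
    rw [gam, gam, Tm_mul, hfun]
  have hmem : Tm (sing j ((-Complex.I) • s3)) ∈ S := key ▸ S.mul_mem (hS a) (hS b)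
  have : Tm (sing j s3) = Complex.I • Tm (sing j ((-Complex.I) • s3)) := by
    rw [← Lmap_apply, ← Lmap_apply, ← LinearMap.map_smul, smul_smul]
    norm_num [Complex.I_mul_I]
  rw [this]
  exact S.smul_mem hmem _

def ddiag (c : ℕ) : Fin k → M2 := fun l => if (l:ℕ) < c then s3 else 1

lemma ddiag_mem (c : ℕ) : Tm (ddiag c : Fin k → M2) ∈ S := by
  induction c with
  | zero =>
    have : (ddiag 0 : Fin k → M2) = fun _ => 1 := by funext l; simp [ddiag]
    rw [this, Tm_one]; exact S.one_mem
  | succ c ih =>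
    by_cases hc : c < k
    · have hfun : (fun l => (ddiag c : Fin k → M2) l * sing ⟨c, hc⟩ s3 l)
          = (ddiag (c+1) : Fin k → M2) := by
        funext l
        rcases lt_trichotomy ((l:ℕ)) c with h | h | h
        · have h3 : l ≠ ⟨c, hc⟩ := fun hc' => by
            rw [hc'] at h; simp at h
          simp only [ddiag, sing, Function.update_of_ne h3]
          rw [if_pos h, if_pos (by omega : (l:ℕ) < c+1), mul_one]
        · have hl : l = ⟨c, hc⟩ := Fin.ext h
          subst hl
          simp only [ddiag, sing, Function.update_self]
          rw [if_neg (by omega), if_pos (by omega), one_mul]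
        · have h3 : l ≠ ⟨c, hc⟩ := fun hc' => by
            rw [hc'] at h; simp at h
          simp only [ddiag, sing, Function.update_of_ne h3]
          rw [if_neg (by omega : ¬ (l:ℕ) < c), if_neg (by omega : ¬ (l:ℕ) < c+1), mul_one]
      have : Tm (ddiag (c+1) : Fin k → M2)
          = Tm (ddiag c : Fin k → M2) * Tm (sing ⟨c, hc⟩ s3) := by
        rw [Tm_mul, hfun]
      rw [this]
      exact S.mul_mem ih (sing_s3_mem S hS _)
    · have : (ddiag (c+1) : Fin k → M2) = ddiag c := by
        funext l
        have := l.isLt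
        rw [ddiag, ddiag]
        by_cases h : (l:ℕ) < c
        · rw [if_pos h, if_pos (by omega)]
        · rw [if_neg h, if_neg (by omega)]
      rw [this]; exact ih
end Surj

end Stmt9

namespace Stmt9
variable {k : ℕ}
open Matrix

lemma pauli_decomp (m : M2) :
    m = ((m 0 0 + m 1 1)/2) • (1:M2) + (-Complex.I*(m 0 1 + m 1 0)/2) • (Complex.I • s1)
      + ((m 0 1 - m 1 0)/2) • (Complex.I • s2) + ((m 0 0 - m 1 1)/2) • s3 := by
  ext i j
  fin_cases i <;> fin_cases j <;>
    simp [s1, s2, s3, Matrix.one_apply] <;> ring_nf <;>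
    simp [Complex.I_sq] <;> ring

section Surj2
variable (S : Subalgebra ℂ (Matrix (X k) (X k) ℂ)) (hS : ∀ a, gam a ∈ S)
include hS

lemma ddiag_sq (c : ℕ) : Tm (ddiag c : Fin k → M2) * Tm (ddiag c) = 1 := by
  rw [Tm_mul]
  have : (fun l => (ddiag c : Fin k → M2) l * ddiag c l) = fun _ => (1:M2) := by
    funext l
    by_cases h : (l:ℕ) < c
    · simp only [ddiag, if_pos h]; exact s3_sq
    · simp only [ddiag, if_neg h]; exact one_mul 1
  rw [this, Tm_one]

lemma sing_site_mem (a : Fin (2*k)) : Tm (sing (jfin a) (site a)) ∈ S := by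
  have hfun : (fun l => (ddiag ((a:ℕ)/2) : Fin k → M2) l * sing (jfin a) (site a) l)
      = gf a := by
    funext l
    rcases lt_trichotomy ((l:ℕ)) ((a:ℕ)/2) with h | h | h
    · have h3 : l ≠ jfin a := fun hc => by
        rw [hc, jfin_coe] at h; omega
      simp only [ddiag, if_pos h, sing, Function.update_of_ne h3, mul_one, gf, if_pos h]
    · have hl : l = jfin a := Fin.ext (by rw [jfin_coe]; exact h)
      subst hl
      simp only [ddiag, sing, Function.update_self, gf]
      rw [if_neg (by omega), one_mul, if_neg (by rw [jfin_coe]; omega),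
        if_pos (jfin_coe a)]
    · have h3 : l ≠ jfin a := fun hc => by
        rw [hc, jfin_coe] at h; omega
      simp only [ddiag, sing, Function.update_of_ne h3, gf]
      rw [if_neg (by omega), if_neg (by omega), if_neg (by omega), one_mul]
  have key : gam a = Tm (ddiag ((a:ℕ)/2)) * Tm (sing (jfin a) (site a)) := by
    rw [gam, Tm_mul, hfun]
  have : Tm (sing (jfin a) (site a)) = Tm (ddiag ((a:ℕ)/2)) * gam a := by
    rw [key, ← mul_assoc, ddiag_sq S hS, one_mul]
  rw [this]
  exact S.mul_mem (ddiag_mem S hS _) (hS a)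

lemma sing_Is1_mem (j : Fin k) : Tm (sing j (Complex.I • s1)) ∈ S := by
  have hk : 2*(j:ℕ) < 2*k := by have := j.isLt; omega
  set a : Fin (2*k) := ⟨2*(j:ℕ), hk⟩ with ha
  have h1 : jfin a = j := Fin.ext (by rw [jfin_coe]; show 2*(j:ℕ)/2 = (j:ℕ); omega)
  have h2 : site a = Complex.I • s1 := by
    rw [site, if_pos (show (a:ℕ) % 2 = 0 by show 2*(j:ℕ) % 2 = 0; omega)]
  have := sing_site_mem S hS a
  rwa [h1, h2] at this

lemma sing_Is2_mem (j : Fin k) : Tm (sing j (Complex.I • s2)) ∈ S := by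
  have hk : 2*(j:ℕ)+1 < 2*k := by have := j.isLt; omega
  set a : Fin (2*k) := ⟨2*(j:ℕ)+1, hk⟩ with ha
  have h1 : jfin a = j := Fin.ext (by rw [jfin_coe]; show (2*(j:ℕ)+1)/2 = (j:ℕ); omega)
  have h2 : site a = Complex.I • s2 := by
    rw [site, if_neg (show ¬ (a:ℕ) % 2 = 0 by show ¬ (2*(j:ℕ)+1) % 2 = 0; omega)]
  have := sing_site_mem S hS a
  rwa [h1, h2] at this

lemma sing_mem (j : Fin k) (m : M2) : Tm (sing j m) ∈ S := by
  have key := pauli_decomp m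
  have expand : Tm (sing j m)
      = ((m 0 0 + m 1 1)/2) • Lmap j (1:M2)
        + (-Complex.I*(m 0 1 + m 1 0)/2) • Lmap j (Complex.I • s1)
        + ((m 0 1 - m 1 0)/2) • Lmap j (Complex.I • s2)
        + ((m 0 0 - m 1 1)/2) • Lmap j s3 := by
    rw [← Lmap_apply]
    conv_lhs => rw [key]
    simp only [map_add, LinearMap.map_smul]
  rw [expand]
  have hone : Lmap j (1:M2) = 1 := by
    rw [Lmap_apply, sing_one, Tm_one]
  refine S.add_mem (S.add_mem (S.add_mem (S.smul_mem ?_ _) (S.smul_mem ?_ _))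
    (S.smul_mem ?_ _)) (S.smul_mem ?_ _)
  · rw [hone]; exact S.one_mem
  · exact sing_Is1_mem S hS j
  · exact sing_Is2_mem S hS j
  · exact sing_s3_mem S hS j

lemma Tm_mem_aux (c : ℕ) : ∀ f : Fin k → M2, (∀ l : Fin k, c ≤ (l:ℕ) → f l = 1) →
    Tm f ∈ S := by
  induction c with
  | zero =>
    intro f hf
    have : f = fun _ => 1 := funext fun l => hf l (Nat.zero_le _)
    rw [this, Tm_one]; exact S.one_mem
  | succ c ih =>
    intro f hf
    by_cases hc : c < k
    · have hsplit : (fun l => Function.update f ⟨c, hc⟩ 1 l * sing ⟨c, hc⟩ (f ⟨c, hc⟩) l)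
          = f := by
        funext l
        rcases eq_or_ne l ⟨c, hc⟩ with h | h
        · subst h
          rw [Function.update_self, sing, Function.update_self, one_mul]
        · rw [Function.update_of_ne h, sing, Function.update_of_ne h, mul_one]
      have : Tm f = Tm (Function.update f ⟨c, hc⟩ 1) * Tm (sing ⟨c, hc⟩ (f ⟨c, hc⟩)) := by
        rw [Tm_mul, hsplit]
      rw [this]
      refine S.mul_mem (ih _ fun l hl => ?_) (sing_mem S hS _ _)
      rcases eq_or_ne l ⟨c, hc⟩ with h | h
      · subst h; exact Function.update_self _ _ _
      · rw [Function.update_of_ne h]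
        refine hf l ?_
        have : (l:ℕ) ≠ c := fun hcc => h (Fin.ext hcc)
        omega
    · exact ih f fun l hl => hf l (by have := l.isLt; omega)

lemma Tm_mem (f : Fin k → M2) : Tm f ∈ S := by
  refine Tm_mem_aux S hS k f fun l hl => absurd l.isLt (by omega)

lemma top_le_S (A : Matrix (X k) (X k) ℂ) : A ∈ S := by
  rw [Matrix.matrix_eq_sum_single A]
  refine S.sum_mem fun x _ => S.sum_mem fun y _ => ?_
  have h1 : single x y (A x y) = (A x y) • single x y (1:ℂ) := by
    rw [Matrix.smul_single, smul_eq_mul, mul_one]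
  have h2 : single x y (1:ℂ) = Tm (fun l => single (x l) (y l) 1) := by
    ext a b
    simp only [Tm_apply, Matrix.single, Matrix.of_apply]
    rw [Finset.prod_boole]
    by_cases h : x = a ∧ y = b
    · rw [if_pos h, if_pos fun i _ => ⟨congrFun h.1 i, congrFun h.2 i⟩]
    · rw [if_neg h, if_neg]
      intro hc
      exact h ⟨funext fun i => (hc i (Finset.mem_univ i)).1,
        funext fun i => (hc i (Finset.mem_univ i)).2⟩
  rw [h1, h2]
  exact S.smul_mem (Tm_mem S hS _) _

end Surj2
end Stmt9


namespace Stmt9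
open CliffordAlgebra

variable {n : ℕ}

lemma Qr_apply (v : Fin n → ℝ) : Qr n v = ∑ i, -(v i * v i) := by
  rw [Qr, QuadraticMap.weightedSumSquares_apply]
  exact Finset.sum_congr rfl fun i _ => by simp

lemma Qr_single (i : Fin n) : Qr n (Pi.single i 1) = -1 := by
  rw [Qr_apply]
  rw [Finset.sum_eq_single i]
  · simp
  · intro j _ hj
    simp [Pi.single_apply, hj]
  · simp

lemma polar_Qr (v w : Fin n → ℝ) :
    QuadraticMap.polar (⇑(Qr n)) v w = ∑ i, -(2 * (v i * w i)) := by
  rw [QuadraticMap.polar]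
  simp only [Qr_apply, Pi.add_apply]
  rw [← Finset.sum_sub_distrib, ← Finset.sum_sub_distrib]
  exact Finset.sum_congr rfl fun i _ => by ring

lemma polar_Qr_single (i j : Fin n) (h : i ≠ j) :
    QuadraticMap.polar (⇑(Qr n)) (Pi.single i 1) (Pi.single j 1) = 0 := by
  rw [polar_Qr]
  refine Finset.sum_eq_zero fun l _ => ?_
  rcases eq_or_ne l i with rfl | hl
  · simp [Pi.single_apply, h.symm]
  · simp [Pi.single_apply, hl]

noncomputable def prodL (l : List (Fin n)) : Cl n :=
  (l.map (fun i => ι (Qr n) (Pi.single i 1))).prod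

lemma prodL_nil : (prodL [] : Cl n) = 1 := rfl

lemma prodL_cons (j : Fin n) (l : List (Fin n)) :
    prodL (j :: l) = ι (Qr n) (Pi.single j 1) * prodL l := by
  simp [prodL]

lemma ι_swap {i j : Fin n} (h : i ≠ j) :
    ι (Qr n) (Pi.single i 1) * ι (Qr n) (Pi.single j 1)
      = -(ι (Qr n) (Pi.single j 1) * ι (Qr n) (Pi.single i 1)) := by
  have := CliffordAlgebra.ι_mul_ι_add_swap (Q := Qr n) (Pi.single i 1) (Pi.single j 1)
  rw [polar_Qr_single i j h, map_zero] at this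
  rw [eq_neg_iff_add_eq_zero]
  exact this

lemma ι_sq_neg_one (i : Fin n) :
    ι (Qr n) (Pi.single i 1) * ι (Qr n) (Pi.single i 1) = algebraMap ℝ _ (-1 : ℝ) := by
  rw [CliffordAlgebra.ι_sq_scalar, Qr_single]

/-- moving a generator into a sorted product. -/
lemma mul_prodL (i : Fin n) : ∀ l : List (Fin n), l.Pairwise (· < ·) →
    ∃ (c : ℝ) (m : List (Fin n)), m.Pairwise (· < ·) ∧ (∀ x ∈ m, x = i ∨ x ∈ l) ∧
      ι (Qr n) (Pi.single i 1) * prodL l = c • prodL m := by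
  intro l
  induction l with
  | nil =>
    intro _
    refine ⟨1, [i], List.pairwise_singleton _ i, by simp, ?_⟩
    rw [one_smul, prodL_cons, prodL_nil]
  | cons j l' ih =>
    intro hs
    rw [List.pairwise_cons] at hs
    obtain ⟨hj, hs'⟩ := hs
    rcases lt_trichotomy i j with hij | rfl | hij
    · refine ⟨1, i :: j :: l', ?_, ?_, ?_⟩
      · rw [List.pairwise_cons]
        exact ⟨fun b hb => by
          rcases List.mem_cons.mp hb with rfl | hb
          · exact hij
          · exact hij.trans (hj b hb), by rw [List.pairwise_cons]; exact ⟨hj, hs'⟩⟩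
      · intro x hx
        rcases List.mem_cons.mp hx with rfl | hx
        · exact Or.inl rfl
        · exact Or.inr hx
      · simp only [one_smul, prodL_cons]
    · refine ⟨-1, l', hs', fun x hx => Or.inr (List.mem_cons_of_mem _ hx), ?_⟩
      rw [prodL_cons, ← mul_assoc, ι_sq_neg_one]
      rw [Algebra.smul_def]
    · obtain ⟨c, m, hm, hmem, heq⟩ := ih hs'
      refine ⟨-c, j :: m, ?_, ?_, ?_⟩
      · rw [List.pairwise_cons]
        refine ⟨fun b hb => ?_, hm⟩
        rcases hmem b hb with rfl | hb'
        · exact hij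
        · exact hj b hb'
      · intro x hx
        rcases List.mem_cons.mp hx with rfl | hx
        · exact Or.inr List.mem_cons_self
        · rcases hmem x hx with rfl | hx'
          · exact Or.inl rfl
          · exact Or.inr (List.mem_cons_of_mem _ hx')
      · rw [prodL_cons, ← mul_assoc, ι_swap (ne_of_gt hij), neg_mul, mul_assoc, heq,
          prodL_cons, mul_smul_comm, neg_smul]

noncomputable def Bfin (n : ℕ) (s : Finset (Fin n)) : Cl n :=
  prodL (s.sort (· ≤ ·))

lemma prodL_mem_range_Bfin (m : List (Fin n)) (hm : m.Pairwise (· < ·)) :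
    prodL m ∈ Set.range (Bfin n) := by
  refine ⟨m.toFinset, ?_⟩
  rw [Bfin, (List.toFinset_sort _ (hm.imp ne_of_lt)).mpr (hm.imp le_of_lt)]

lemma span_Bfin : Submodule.span ℝ (Set.range (Bfin n)) = ⊤ := by
  set P := Submodule.span ℝ (Set.range (Bfin n)) with hP
  have hone : (1 : Cl n) ∈ P := by
    refine Submodule.subset_span ⟨∅, ?_⟩
    rw [Bfin, Finset.sort_empty, prodL_nil]
  have hstab1 : ∀ (i : Fin n), ∀ p ∈ P, ι (Qr n) (Pi.single i 1) * p ∈ P := by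
    intro i p hp
    induction hp using Submodule.span_induction with
    | mem b hb =>
      obtain ⟨s, rfl⟩ := hb
      obtain ⟨c, m, hm, _, heq⟩ := mul_prodL i (s.sort (· ≤ ·)) (Finset.sortedLT_sort s).pairwise
      rw [Bfin, heq]
      exact P.smul_mem c (Submodule.subset_span (prodL_mem_range_Bfin m hm))
    | zero => rw [mul_zero]; exact P.zero_mem
    | add x y _ _ hx hy => rw [mul_add]; exact P.add_mem hx hy
    | smul r x _ hx => rw [mul_smul_comm]; exact P.smul_mem r hx
  have hstab : ∀ (v : Fin n → ℝ), ∀ p ∈ P, ι (Qr n) v * p ∈ P := by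
    intro v p hp
    have hv : (v : Fin n → ℝ) = ∑ i, v i • (Pi.single i (1:ℝ) : Fin n → ℝ) := by
      funext j
      rw [Finset.sum_apply]
      rw [Finset.sum_eq_single j]
      · simp
      · intro b _ hb; simp [Pi.single_apply, hb.symm]
      · simp
    rw [show ι (Qr n) v = ∑ i, v i • ι (Qr n) (Pi.single i 1) by
      conv_lhs => rw [hv]
      rw [map_sum]
      exact Finset.sum_congr rfl fun i _ => by rw [LinearMap.map_smul]]
    rw [Finset.sum_mul]
    refine P.sum_mem fun i _ => ?_
    rw [smul_mul_assoc]
    exact P.smul_mem _ (hstab1 i p hp)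
  have hmul : ∀ x : Cl n, ∀ p ∈ P, x * p ∈ P := by
    intro x
    induction x using CliffordAlgebra.induction with
    | algebraMap r =>
      intro p hp
      rw [← Algebra.smul_def]
      exact P.smul_mem r hp
    | ι v => exact hstab v
    | mul a b ha hb =>
      intro p hp
      rw [mul_assoc]
      exact ha _ (hb p hp)
    | add a b ha hb =>
      intro p hp
      rw [add_mul]
      exact P.add_mem (ha p hp) (hb p hp)
  rw [eq_top_iff]
  intro x _
  have := hmul x 1 hone
  rwa [mul_one] at this

lemma finite_Cl : Module.Finite ℝ (Cl n) := by
  refine ⟨(Submodule.fg_def).mpr ⟨Set.range (Bfin n), Set.finite_range _, span_Bfin⟩⟩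

noncomputable def BfinC (n : ℕ) (s : Finset (Fin n)) : CliffC n :=
  (1 : ℂ) ⊗ₜ[ℝ] Bfin n s

lemma span_BfinC : Submodule.span ℂ (Set.range (BfinC n)) = ⊤ := by
  set P := Submodule.span ℂ (Set.range (BfinC n)) with hP
  have h1 : ∀ x : Cl n, (1:ℂ) ⊗ₜ[ℝ] x ∈ P := by
    intro x
    have hx : x ∈ Submodule.span ℝ (Set.range (Bfin n)) := by
      rw [span_Bfin]; trivial
    induction hx using Submodule.span_induction with
    | mem b hb =>
      obtain ⟨s, rfl⟩ := hb
      exact Submodule.subset_span ⟨s, rfl⟩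
    | zero => rw [TensorProduct.tmul_zero]; exact P.zero_mem
    | add x y _ _ hx hy => rw [TensorProduct.tmul_add]; exact P.add_mem hx hy
    | smul r x _ hx =>
      rw [TensorProduct.tmul_smul]
      have : (r : ℝ) • ((1:ℂ) ⊗ₜ[ℝ] x) = (algebraMap ℝ ℂ r) • ((1:ℂ) ⊗ₜ[ℝ] x) := by
        rw [algebraMap_smul]
      rw [this]
      exact P.smul_mem _ hx
  rw [eq_top_iff]
  intro z _
  induction z using TensorProduct.induction_on with
  | zero => exact P.zero_mem
  | tmul a x =>
    have : a ⊗ₜ[ℝ] x = a • ((1:ℂ) ⊗ₜ[ℝ] x) := by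
      rw [TensorProduct.smul_tmul', smul_eq_mul, mul_one]
    rw [this]
    exact P.smul_mem a (h1 x)
  | add x y hx hy => exact P.add_mem (hx trivial) (hy trivial)

lemma finite_CliffC : Module.Finite ℂ (CliffC n) := by
  refine ⟨(Submodule.fg_def).mpr ⟨Set.range (BfinC n), Set.finite_range _, span_BfinC⟩⟩

lemma finrank_CliffC_le : Module.finrank ℂ (CliffC n) ≤ 2 ^ n := by
  classical
  have h1 := finrank_span_le_card (R := ℂ) (Set.range (BfinC n))
  rw [span_BfinC, finrank_top] at h1
  refine h1.trans ?_
  rw [Set.toFinset_card]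
  exact (Fintype.card_range_le (BfinC n)).trans (by rw [Fintype.card_finset, Fintype.card_fin])

end Stmt9

namespace Stmt9
open CliffordAlgebra Matrix

variable {k : ℕ}

noncomputable def mgam (k : ℕ) : (Fin (2*k) → ℝ) →ₗ[ℝ] Matrix (X k) (X k) ℂ where
  toFun v := ∑ a, v a • gam a
  map_add' v w := by
    simp only [Pi.add_apply, add_smul]
    rw [Finset.sum_add_distrib]
  map_smul' r v := by
    simp only [Pi.smul_apply, smul_eq_mul, RingHom.id_apply]
    rw [Finset.smul_sum]
    exact Finset.sum_congr rfl fun a _ => by rw [mul_smul]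

lemma mgam_apply (v : Fin (2*k) → ℝ) : mgam k v = ∑ a, v a • gam a := rfl

lemma mgam_sq (v : Fin (2*k) → ℝ) :
    mgam k v * mgam k v = algebraMap ℝ (Matrix (X k) (X k) ℂ) (Qr (2*k) v) := by
  classical
  set t : Fin (2*k) → Fin (2*k) → Matrix (X k) (X k) ℂ :=
    fun a b => (v a * v b) • (gam a * gam b) with ht
  have hlhs : mgam k v * mgam k v = ∑ a, ∑ b, t a b := by
    rw [mgam_apply, Finset.sum_mul_sum]
    refine Finset.sum_congr rfl fun a _ => Finset.sum_congr rfl fun b _ => ?_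
    rw [smul_mul_assoc, mul_smul_comm, smul_smul, ht]
  have hsym : ∀ a b, a ≠ b → t a b + t b a = 0 := by
    intro a b hab
    rw [ht]
    dsimp only
    rw [gam_anticomm hab, smul_neg, mul_comm (v a) (v b), neg_add_cancel]
  have hdiag : ∑ a, ∑ b, t a b = ∑ a, t a a := by
    have h2 : (∑ a, ∑ b, t a b) + (∑ a, ∑ b, t a b)
        = (∑ a, t a a) + (∑ a, t a a) := by
      have e0 : (∑ a, ∑ b, t a b) + (∑ a, ∑ b, t a b)
          = ∑ a, ∑ b, (t a b + t b a) := by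
        nth_rewrite 2 [Finset.sum_comm]
        rw [← Finset.sum_add_distrib]
        exact Finset.sum_congr rfl fun a _ => by rw [← Finset.sum_add_distrib]
      rw [e0]
      have : ∀ a : Fin (2*k), (∑ b, (t a b + t b a))
          = ∑ b, (if a = b then t a a + t a a else 0) := by
        intro a
        refine Finset.sum_congr rfl fun b _ => ?_
        rcases eq_or_ne a b with rfl | hab
        · rw [if_pos rfl]
        · rw [if_neg hab, hsym a b hab]
      rw [Finset.sum_congr rfl fun a _ => this a]
      rw [Finset.sum_congr rfl fun a _ => Finset.sum_ite_eq (Finset.univ) a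
        (fun _ => t a a + t a a)]
      simp [Finset.sum_add_distrib]
    have h3 : (2:ℂ) • (∑ a, ∑ b, t a b) = (2:ℂ) • (∑ a, t a a) := by
      rw [two_smul, two_smul]
      exact h2
    exact smul_right_injective _ (two_ne_zero) h3
  rw [hlhs, hdiag]
  rw [Qr_apply, map_sum]
  refine Finset.sum_congr rfl fun a _ => ?_
  rw [ht]
  dsimp only
  rw [gam_sq a, Algebra.algebraMap_eq_smul_one, smul_neg, ← neg_smul]

noncomputable def g0 (k : ℕ) : Cl (2*k) →ₐ[ℝ] Matrix (X k) (X k) ℂ :=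
  CliffordAlgebra.lift (Qr (2*k)) ⟨mgam k, mgam_sq⟩

lemma g0_ι (v : Fin (2*k) → ℝ) : g0 k (ι (Qr (2*k)) v) = mgam k v := by
  rw [g0, CliffordAlgebra.lift_ι_apply]

noncomputable def F (k : ℕ) : CliffC (2*k) →ₐ[ℂ] Matrix (X k) (X k) ℂ :=
  Algebra.TensorProduct.lift (Algebra.ofId ℂ _) (g0 k)
    (fun a b => Algebra.commutes a ((g0 k) b))

lemma F_tmul (a : ℂ) (x : Cl (2*k)) :
    F k (a ⊗ₜ[ℝ] x) = a • g0 k x := by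
  unfold F
  exact (Algebra.TensorProduct.lift_tmul _ _ _ a x).trans (by rw [Algebra.ofId_apply, ← Algebra.smul_def])

lemma gam_mem_range (a : Fin (2*k)) : gam a ∈ (F k).range := by
  refine ⟨(1:ℂ) ⊗ₜ[ℝ] ι (Qr (2*k)) (Pi.single a 1), ?_⟩
  show F k ((1:ℂ) ⊗ₜ[ℝ] ι (Qr (2*k)) (Pi.single a 1)) = gam a
  rw [F_tmul, one_smul, g0_ι, mgam_apply]
  rw [Finset.sum_eq_single a]
  · simp
  · intro b _ hb
    simp [Pi.single_apply, hb]
  · simp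

lemma F_surjective : Function.Surjective (F k) := by
  intro A
  have : A ∈ (F k).range := top_le_S (F k).range gam_mem_range A
  obtain ⟨z, hz⟩ := this
  exact ⟨z, hz⟩

lemma F_injective : Function.Injective (F k) := by
  classical
  have : Module.Finite ℂ (CliffC (2*k)) := finite_CliffC
  have h1 := LinearMap.finrank_range_add_finrank_ker (F k).toLinearMap
  have h2 : LinearMap.range (F k).toLinearMap = ⊤ :=
    LinearMap.range_eq_top.mpr F_surjective
  rw [h2, finrank_top] at h1
  have hM : Module.finrank ℂ (Matrix (X k) (X k) ℂ) = 2 ^ (2*k) := by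
    rw [Module.finrank_matrix]
    have hc : Fintype.card (X k) = 2 ^ k := by
      rw [Fintype.card_fun, Fintype.card_fin, Fintype.card_fin]
    rw [hc, Module.finrank_self, mul_one, ← pow_add]
    congr 1
    omega
  rw [hM] at h1
  have hC : Module.finrank ℂ (CliffC (2*k)) ≤ 2 ^ (2*k) := finrank_CliffC_le
  have hker : Module.finrank ℂ (LinearMap.ker (F k).toLinearMap) = 0 := by omega
  have hbot : LinearMap.ker (F k).toLinearMap = ⊥ := Submodule.finrank_eq_zero.mp hker
  exact LinearMap.ker_eq_bot.mp hbot

end Stmt9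

namespace Stmt9
open CliffordAlgebra Matrix
variable {k : ℕ}

lemma g0_tau (x : Cl (2*k)) :
    g0 k (reverse (Q := Qr (2*k)) (involute x)) = (g0 k x)ᴴ := by
  induction x using CliffordAlgebra.induction with
  | algebraMap r =>
    rw [AlgHom.commutes involute r, CliffordAlgebra.reverse.commutes,
      AlgHom.commutes (g0 k) r]
    rw [IsScalarTower.algebraMap_apply ℝ ℂ (Matrix (X k) (X k) ℂ)]
    rw [Algebra.algebraMap_eq_smul_one, Matrix.conjTranspose_smul,
      Matrix.conjTranspose_one]
    congr 1
    simp [Complex.conj_ofReal]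
  | ι v =>
    rw [involute_ι, map_neg, reverse_ι, map_neg, g0_ι, mgam_apply]
    rw [Matrix.conjTranspose_sum]
    rw [← Finset.sum_neg_distrib]
    refine Finset.sum_congr rfl fun a _ => ?_
    rw [Matrix.conjTranspose_smul, gam_h, star_trivial, smul_neg]
  | mul x y hx hy =>
    rw [_root_.map_mul involute x y, CliffordAlgebra.reverse.map_mul,
      _root_.map_mul (g0 k), hx, hy, _root_.map_mul (g0 k) x y,
      Matrix.conjTranspose_mul]
  | add x y hx hy =>
    rw [_root_.map_add involute x y, _root_.map_add (reverse (Q := Qr (2*k))),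
      _root_.map_add (g0 k), hx, hy, _root_.map_add (g0 k) x y,
      Matrix.conjTranspose_add]

lemma F_tau (φ : CliffC (2*k)) : F k (tau (2*k) φ) = (F k φ)ᴴ := by
  induction φ using TensorProduct.induction_on with
  | zero => rw [map_zero, map_zero, Matrix.conjTranspose_zero]
  | tmul a x =>
    rw [tau, TensorProduct.map_tmul, F_tmul, F_tmul, Matrix.conjTranspose_smul]
    rw [LinearMap.comp_apply]
    show (starRingEnd ℂ a) • g0 k (reverse (involute x)) = star a • (g0 k x)ᴴ
    rw [g0_tau]
    rfl
  | add x y hx hy => rw [map_add, map_add, hx, hy, map_add, Matrix.conjTranspose_add]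

end Stmt9

open scoped Matrix in
/-- For every `k` there is a `ℂ`-algebra isomorphism `i : ℂl_{2k} ≃ ℂ(2^k)` under which
the conjugate-linear antiautomorphism `τ` corresponds to the conjugate transpose of
matrices: `i (τ φ) = (i φ)ᴴ` for all `φ`. -/
theorem stmt9 (k : ℕ) :
    ∃ i : CliffC (2 * k) ≃ₐ[ℂ] Matrix (Fin (2 ^ k)) (Fin (2 ^ k)) ℂ,
      ∀ φ : CliffC (2 * k), i (tau (2 * k) φ) = (i φ)ᴴ := by
  classical
  have hbij : Function.Bijective (Stmt9.F k) := ⟨Stmt9.F_injective, Stmt9.F_surjective⟩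
  let E1 : CliffC (2*k) ≃ₐ[ℂ] Matrix (Stmt9.X k) (Stmt9.X k) ℂ :=
    AlgEquiv.ofBijective _ hbij
  let e : Stmt9.X k ≃ Fin (2^k) := finFunctionFinEquiv
  refine ⟨E1.trans (Matrix.reindexAlgEquiv ℂ ℂ e), fun φ => ?_⟩
  have h1 : E1 (tau (2*k) φ) = (E1 φ)ᴴ := Stmt9.F_tau φ
  show (Matrix.reindexAlgEquiv ℂ ℂ e) (E1 (tau (2*k) φ))
      = ((Matrix.reindexAlgEquiv ℂ ℂ e) (E1 φ))ᴴ
  rw [h1]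
  simp [Matrix.reindexAlgEquiv_apply, Matrix.reindex_apply, Matrix.conjTranspose_submatrix]
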